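/- For every integer n ≥ 1, the units of finite multiplicative order of the ring R_n = ℤ[T]/(Tⁿ − 1) are exactly the classes ±T̄^i for 0 ≤ i < n, and these 2n elements are pairwise distinct; in particular the set of roots of unity of R_n has exactly 2n elements. -/

import Mathlib

open Polynomial Finset

lemma orth {n : ℕ} {ζ : ℂ} (hζ : IsPrimitiveRoot ζ n) (d : ℕ) :
    ∑ j ∈ range n, (ζ ^ d) ^ j = if n ∣ d then (n : ℂ) else 0 := by
  by_cases h : n ∣ d
  · rw [if_pos h]
    have : ζ ^ d = 1 := (hζ.pow_eq_one_iff_dvd d).mpr h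
    simp [this]
  · rw [if_neg h]
    have h1 : ζ ^ d ≠ 1 := fun hc => h ((hζ.pow_eq_one_iff_dvd d).mp hc)
    have h3 := geom_sum_mul (ζ ^ d) n
    have h2 : (ζ ^ d) ^ n - 1 = 0 := by
      rw [← pow_mul, mul_comm, pow_mul, hζ.pow_eq_one, one_pow, sub_self]
    rw [h2] at h3
    exact (mul_eq_zero.mp h3).resolve_right (sub_ne_zero.mpr h1)

lemma divIff {n k l : ℕ} (hn : 1 ≤ n) (hk : k < n) (hl : l < n) :
    n ∣ k + (n-1)*l ↔ k = l := by
  constructor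
  · intro h
    have h2 : ((k + (n-1)*l : ℕ) : ZMod n) = 0 := (ZMod.natCast_eq_zero_iff _ _).mpr h
    push_cast at h2
    rw [Nat.cast_sub hn] at h2
    have h3 : ((k : ZMod n)) = (l : ZMod n) := by
      push_cast at h2 ⊢; linear_combination h2 - (l : ZMod n) * ZMod.natCast_self n
    have := (ZMod.natCast_eq_natCast_iff _ _ _).mp h3
    exact (Nat.ModEq.eq_of_lt_of_lt this hk hl)
  · rintro rfl
    rw [← ZMod.natCast_eq_zero_iff]
    push_cast
    rw [Nat.cast_sub hn]
    push_cast
    linear_combination (k : ZMod n) * ZMod.natCast_self n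

lemma oneCoeff {n : ℕ} (a : ℕ → ℤ) (h : ∑ k ∈ range n, a k ^ 2 = 1) :
    ∃ i, i < n ∧ (a i = 1 ∨ a i = -1) ∧ ∀ k, k < n → k ≠ i → a k = 0 := by
  have hex : ∃ i ∈ range n, a i ≠ 0 := by
    by_contra hc
    push_neg at hc
    rw [Finset.sum_eq_zero (fun k hk => by rw [hc k hk]; ring)] at h
    exact one_ne_zero h.symm
  obtain ⟨i, hi, hai⟩ := hex
  have hsplit : a i ^ 2 + ∑ k ∈ (range n).erase i, a k ^ 2 = 1 := by
    rw [Finset.add_sum_erase _ (fun k => a k ^ 2) hi]; exact h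
  have h1 : 1 ≤ a i ^ 2 := by rcases hai.lt_or_gt with h'|h' <;> nlinarith
  have h2 : 0 ≤ ∑ k ∈ (range n).erase i, a k ^ 2 :=
    Finset.sum_nonneg (fun k _ => sq_nonneg _)
  have hsq : a i ^ 2 = 1 := le_antisymm (by omega) h1
  have hz : ∀ k ∈ (range n).erase i, a k ^ 2 = 0 :=
    (Finset.sum_eq_zero_iff_of_nonneg (fun k _ => sq_nonneg _)).mp (by omega)
  refine ⟨i, Finset.mem_range.mp hi, sq_eq_one_iff.mp hsq, fun k hk hki => ?_⟩
  exact pow_eq_zero_iff (n := 2) (by norm_num) |>.mp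
    (hz k (Finset.mem_erase.mpr ⟨hki, Finset.mem_range.mpr hk⟩))

lemma keyA {n : ℕ} (hn : 1 ≤ n) {f : Polynomial ℤ} (hdeg : f.degree < n) {m : ℕ}
    (hm : 0 < m) (hdvd : (X ^ n - 1 : Polynomial ℤ) ∣ f ^ m - 1) :
    ∃ i, i < n ∧ (f = X ^ i ∨ f = -X ^ i) := by
  have hdegXn : ((X:Polynomial ℤ) ^ n - 1).degree = n := by
    simpa using Polynomial.degree_X_pow_sub_C hn (1:ℤ)
  have hf0 : f ≠ 0 := by
    rintro rfl
    have h0 : ((0:Polynomial ℤ) ^ m - 1) = -1 := by simp [zero_pow hm.ne']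
    rw [h0] at hdvd
    have := Polynomial.eq_zero_of_dvd_of_degree_lt hdvd
      (by rw [hdegXn]; simp; exact_mod_cast hn)
    simp at this
  have hnat : f.natDegree < n := (Polynomial.natDegree_lt_iff_degree_lt hf0).mpr hdeg
  set a : ℕ → ℤ := fun k => f.coeff k with ha
  set ζ : ℂ := Complex.exp (2 * Real.pi * Complex.I / n) with hζdef
  have hζ : IsPrimitiveRoot ζ n := Complex.isPrimitiveRoot_exp n (by omega)
  have hζn : ζ ^ n = 1 := hζ.pow_eq_one
  set φ : ℤ →+* ℂ := Int.castRingHom ℂ with hφ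
  obtain ⟨g, hg⟩ := hdvd
  have hzm : ∀ j, (f.eval₂ φ (ζ ^ j)) ^ m = 1 := by
    intro j
    have h5 := congrArg (Polynomial.eval₂ φ (ζ ^ j)) hg
    simp only [Polynomial.eval₂_sub, Polynomial.eval₂_mul, Polynomial.eval₂_pow,
      Polynomial.eval₂_one, Polynomial.eval₂_X] at h5
    rw [← pow_mul, mul_comm j n, pow_mul, hζn, one_pow, sub_self, zero_mul] at h5
    exact sub_eq_zero.mp h5
  have hζabs : ‖ζ‖ = 1 := by
    exact Complex.norm_eq_one_of_pow_eq_one hζn (by omega)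
  have hconjζ : (starRingEnd ℂ) ζ = ζ ^ (n - 1) := by
    have h1 : ζ * (starRingEnd ℂ) ζ = 1 := by
      rw [Complex.mul_conj]
      norm_cast
      rw [Complex.normSq_eq_norm_sq, hζabs]
      norm_num
    have h2 : ζ * ζ ^ (n - 1) = 1 := by
      rw [← pow_succ']
      have hsucc : n - 1 + 1 = n := by omega
      rw [hsucc, hζn]
    have hζne : ζ ≠ 0 := by
      intro hc; rw [hc] at h2; simp at h2
    rw [← h2] at h1
    exact mul_left_cancel₀ hζne h1
  have hconj : ∀ j, (starRingEnd ℂ) (f.eval₂ φ (ζ ^ j)) = f.eval₂ φ ((ζ ^ (n-1)) ^ j) := by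
    intro j
    rw [Polynomial.hom_eval₂]
    congr 1
    · exact Subsingleton.elim _ _
    · rw [map_pow, hconjζ]
  have hexp : ∀ x : ℂ, f.eval₂ φ x = ∑ k ∈ range n, (a k : ℂ) * x ^ k := by
    intro x
    rw [Polynomial.eval₂_eq_sum_range' φ hnat x]
    rfl
  have expand : ∀ j, f.eval₂ φ (ζ ^ j) * (starRingEnd ℂ) (f.eval₂ φ (ζ ^ j))
      = ∑ k ∈ range n, ∑ l ∈ range n,
          ((a k : ℂ) * (a l : ℂ)) * (ζ ^ (k + (n-1)*l)) ^ j := by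
    intro j
    rw [hconj, hexp, hexp, Finset.sum_mul_sum]
    exact Finset.sum_congr rfl fun k _ => Finset.sum_congr rfl fun l _ => by ring
  have lhs : ∑ j ∈ range n, f.eval₂ φ (ζ ^ j) * (starRingEnd ℂ) (f.eval₂ φ (ζ ^ j)) = (n : ℂ) := by
    have h1 : ∀ j ∈ range n, f.eval₂ φ (ζ ^ j) * (starRingEnd ℂ) (f.eval₂ φ (ζ ^ j)) = 1 := by
      intro j _
      rw [Complex.mul_conj]
      norm_cast
      rw [Complex.normSq_eq_norm_sq,
        Complex.norm_eq_one_of_pow_eq_one (hzm j) hm.ne']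
      norm_num
    rw [Finset.sum_congr rfl h1]
    simp
  have big : ∑ j ∈ range n, f.eval₂ φ (ζ ^ j) * (starRingEnd ℂ) (f.eval₂ φ (ζ ^ j))
      = (∑ k ∈ range n, (a k : ℂ)^2) * n := by
    rw [Finset.sum_congr rfl (fun j _ => expand j), Finset.sum_comm]
    rw [Finset.sum_congr rfl (fun k _ => Finset.sum_comm), Finset.sum_mul]
    refine Finset.sum_congr rfl fun k hk => ?_
    rw [Finset.sum_congr rfl (fun l _ => (Finset.mul_sum _ _ _).symm)]
    rw [Finset.sum_congr rfl (fun l hl => by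
      rw [orth hζ, if_congr (divIff hn (Finset.mem_range.mp hk) (Finset.mem_range.mp hl)) rfl rfl])]
    simp only [mul_ite, mul_zero]
    rw [Finset.sum_ite_eq (range n) k (fun l => (a k : ℂ) * (a l : ℂ) * n), if_pos hk]
    ring
  have hC : (∑ k ∈ range n, (a k : ℂ)^2) = 1 := by
    have hne : (n : ℂ) ≠ 0 := Nat.cast_ne_zero.mpr (by omega)
    refine mul_right_cancel₀ hne ?_
    rw [one_mul, ← big, lhs]
  have hsum : ∑ k ∈ range n, a k ^ 2 = 1 := by exact_mod_cast hC
  obtain ⟨i, hi, hpm, hzero⟩ := oneCoeff a hsum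
  have hfX : f = C (a i) * X ^ i := by
    ext k
    rw [Polynomial.coeff_C_mul, Polynomial.coeff_X_pow]
    by_cases hk : k = i
    · subst hk; simp [ha]
    · rw [if_neg hk, mul_zero]
      by_cases hkn : k < n
      · exact hzero k hkn hk
      · exact Polynomial.coeff_eq_zero_of_degree_lt
          (lt_of_lt_of_le hdeg (by exact_mod_cast Nat.cast_le.mpr (le_of_not_gt hkn)))
  refine ⟨i, hi, ?_⟩
  rcases hpm with h1 | h1
  · left; rw [hfX, h1]; simp
  · right; rw [hfX, h1]; simp


set_option maxHeartbeats 2000000 in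
/-- For `n ≥ 1`, the units of finite multiplicative order of
`R_n = ℤ[T]/(Tⁿ - 1)` are exactly the elements `± T̄^i`, `0 ≤ i < n`; these `2n`
elements are pairwise distinct, so the set of roots of unity of `R_n` has `2n` elements. -/
theorem stmt_5 (n : ℕ) (hn : 1 ≤ n) :
    ({x : Polynomial ℤ ⧸ Ideal.span {(Polynomial.X : Polynomial ℤ) ^ n - 1} |
        ∃ m : ℕ, 0 < m ∧ x ^ m = 1} =
      Set.range (fun p : Bool × Fin n =>
        (if p.1 then (1 : Polynomial ℤ ⧸ Ideal.span {(Polynomial.X : Polynomial ℤ) ^ n - 1})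
          else -1) *
          (Ideal.Quotient.mk (Ideal.span {(Polynomial.X : Polynomial ℤ) ^ n - 1})
            Polynomial.X) ^ (p.2 : ℕ))) ∧
    Function.Injective (fun p : Bool × Fin n =>
      (if p.1 then (1 : Polynomial ℤ ⧸ Ideal.span {(Polynomial.X : Polynomial ℤ) ^ n - 1})
        else -1) *
        (Ideal.Quotient.mk (Ideal.span {(Polynomial.X : Polynomial ℤ) ^ n - 1})
          Polynomial.X) ^ (p.2 : ℕ)) ∧
    Set.ncard {x : Polynomial ℤ ⧸ Ideal.span {(Polynomial.X : Polynomial ℤ) ^ n - 1} |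
        ∃ m : ℕ, 0 < m ∧ x ^ m = 1} = 2 * n := by
  set I : Ideal (Polynomial ℤ) := Ideal.span {(X : Polynomial ℤ) ^ n - 1} with hI
  set mk := Ideal.Quotient.mk I with hmk
  have hmonic : ((X : Polynomial ℤ) ^ n - 1).Monic := by
    simpa using Polynomial.monic_X_pow_sub_C (1 : ℤ) (by omega : n ≠ 0)
  have hdegXn : ((X : Polynomial ℤ) ^ n - 1).degree = n := by
    simpa using Polynomial.degree_X_pow_sub_C hn (1 : ℤ)
  have hTn : (mk X) ^ n = 1 := by
    have : mk ((X : Polynomial ℤ) ^ n - 1) = 0 :=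
      (Ideal.Quotient.eq_zero_iff_mem).mpr (Ideal.subset_span rfl)
    rw [map_sub, map_pow, map_one, sub_eq_zero] at this
    exact this
  have e : Bool → ℤ := fun b => if b then 1 else -1
  set F : Bool × Fin n → Polynomial ℤ ⧸ I := fun p =>
    (if p.1 then (1 : Polynomial ℤ ⧸ I) else -1) * (mk X) ^ (p.2 : ℕ) with hF
  have hFeq : ∀ p : Bool × Fin n, F p = mk (C (if p.1 then (1:ℤ) else -1) * X ^ (p.2 : ℕ)) := by
    intro ⟨b, i⟩
    cases b <;> simp [hF] <;> ring
  -- injectivity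
  have hinj : Function.Injective F := by
    rintro ⟨b1, i⟩ ⟨b2, j⟩ h
    rw [hFeq, hFeq] at h
    have hsub : ((X : Polynomial ℤ) ^ n - 1) ∣
        (C (if b1 then (1:ℤ) else -1) * X ^ (i : ℕ) - C (if b2 then (1:ℤ) else -1) * X ^ (j : ℕ)) := by
      rw [← Ideal.mem_span_singleton, ← hI, ← Ideal.Quotient.eq_zero_iff_mem, map_sub, sub_eq_zero]
      exact h
    have hc1 : (if b1 then (1:ℤ) else -1) ≠ 0 := by cases b1 <;> norm_num
    have hc2 : (if b2 then (1:ℤ) else -1) ≠ 0 := by cases b2 <;> norm_num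
    have hdlt : (C (if b1 then (1:ℤ) else -1) * X ^ (i : ℕ) -
        C (if b2 then (1:ℤ) else -1) * X ^ (j : ℕ)).degree < ((X : Polynomial ℤ) ^ n - 1).degree := by
      rw [hdegXn]
      refine lt_of_le_of_lt (Polynomial.degree_sub_le _ _) (max_lt ?_ ?_)
      · rw [Polynomial.degree_C_mul_X_pow _ hc1]
        exact_mod_cast i.isLt
      · rw [Polynomial.degree_C_mul_X_pow _ hc2]
        exact_mod_cast j.isLt
    have hzero := Polynomial.eq_zero_of_dvd_of_degree_lt hsub hdlt
    have heqpoly : C (if b1 then (1:ℤ) else -1) * X ^ (i : ℕ)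
        = C (if b2 then (1:ℤ) else -1) * X ^ (j : ℕ) := sub_eq_zero.mp hzero
    have h1 := congrArg (fun p => Polynomial.coeff p (i : ℕ)) heqpoly
    simp only [Polynomial.coeff_C_mul, Polynomial.coeff_X_pow, if_pos rfl, mul_one,
      mul_ite, mul_zero] at h1
    by_cases hij : (i : ℕ) = (j : ℕ)
    · rw [if_pos hij] at h1
      have hb : b1 = b2 := by cases b1 <;> cases b2 <;> simp_all
      exact Prod.ext_iff.mpr ⟨hb, Fin.ext hij⟩
    · rw [if_neg hij] at h1
      exact absurd h1 hc1
  -- set equality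
  have hset : {x : Polynomial ℤ ⧸ I | ∃ m : ℕ, 0 < m ∧ x ^ m = 1} = Set.range F := by
    ext x
    constructor
    · rintro ⟨m, hm, hxm⟩
      obtain ⟨f₀, rfl⟩ := Ideal.Quotient.mk_surjective x
      have hmod : mk (f₀ %ₘ ((X : Polynomial ℤ) ^ n - 1)) = mk f₀ := by
        conv_rhs => rw [← Polynomial.modByMonic_add_div f₀ ((X : Polynomial ℤ) ^ n - 1)]
        have hq : mk ((X : Polynomial ℤ) ^ n - 1) = 0 :=
          (Ideal.Quotient.eq_zero_iff_mem).mpr (Ideal.subset_span rfl)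
        rw [map_add, map_mul, hq, zero_mul, add_zero]
      set f := f₀ %ₘ ((X : Polynomial ℤ) ^ n - 1) with hfdef
      have hdeg : f.degree < (n : ℕ) := by
        rw [← hdegXn]; exact Polynomial.degree_modByMonic_lt f₀ hmonic
      have hdvd : ((X : Polynomial ℤ) ^ n - 1) ∣ f ^ m - 1 := by
        rw [← Ideal.mem_span_singleton, ← hI, ← Ideal.Quotient.eq_zero_iff_mem, map_sub,
          map_pow, map_one, sub_eq_zero, ← hmk, hmod]
        exact hxm
      obtain ⟨i, hi, hcase⟩ := keyA hn hdeg hm hdvd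
      rcases hcase with hfeq | hfeq
      · refine ⟨(true, ⟨i, hi⟩), ?_⟩
        rw [hFeq]
        simp only [if_true]
        rw [← hmod, hfeq]
        norm_num
      · refine ⟨(false, ⟨i, hi⟩), ?_⟩
        rw [hFeq]
        simp only [if_false]
        rw [← hmod, hfeq]
        simp
    · rintro ⟨⟨b, i⟩, rfl⟩
      refine ⟨2 * n, by omega, ?_⟩
      rw [hF]
      simp only
      rw [mul_pow]
      have h1 : ((if b then (1 : Polynomial ℤ ⧸ I) else -1)) ^ (2 * n) = 1 := by
        cases b
        · rw [if_neg (by simp)]; exact (even_two_mul n).neg_one_pow (α := Polynomial ℤ ⧸ I)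
        · simp
      have h2 : ((mk X) ^ (i : ℕ)) ^ (2 * n) = 1 := by
        rw [← pow_mul, show (i : ℕ) * (2 * n) = n * (2 * (i : ℕ)) by ring, pow_mul, hTn, one_pow]
      rw [h1, h2, one_mul]
  have hcard : Set.ncard {x : Polynomial ℤ ⧸ I | ∃ m : ℕ, 0 < m ∧ x ^ m = 1} = 2 * n := by
    rw [hset, ← Nat.card_coe_set_eq, Nat.card_range_of_injective hinj]
    simp [Nat.card_eq_fintype_card, mul_comm]
  exact ⟨hset, hinj, hcard⟩
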